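/- Let X and Y be finite nonempty sets, let P_XY be a pmf on X×Y, let n ∈ ℕ, and let P̃ be a pmf on X^n×Y^n that is absolutely continuous with respect to the n-fold product P_XY^n (coordinates paired as ((x_1,y_1),…,(x_n,y_n))). Let (X̃^n,Ỹ^n) ~ P̃. Then H(Ỹ^n|X̃^n) + D(P̃‖P_XY^n) ≥ Σ_{j=1}^n ( H(Ỹ_j|X̃_j) + D(P̃_{(X_j,Y_j)}‖P_XY) ), where P̃_{(X_j,Y_j)} is the j-th pair marginal of P̃ and conditional entropy is H(B|A) := H(joint law of (A,B)) − H(law of A). -/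

import Mathlib

open scoped BigOperators Classical

noncomputable section

/-- Kullback–Leibler divergence between two pmfs on a finite set (natural log,
with the convention `0·log(0/q) = 0` encoded by the term vanishing). -/
def KL {Ω : Type} [Fintype Ω] (P Q : Ω → ℝ) : ℝ :=
  ∑ ω, P ω * Real.log (P ω / Q ω)

/-- `P` is a probability mass function on the finite set `Ω`. -/
def IsPMF {Ω : Type} [Fintype Ω] (P : Ω → ℝ) : Prop :=
  (∀ ω, 0 ≤ P ω) ∧ ∑ ω, P ω = 1

/-- Pushforward (law of `φ`) of the pmf `P` under the map `φ`. -/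
def pushf {Ω A : Type} [Fintype Ω] (P : Ω → ℝ) (φ : Ω → A) : A → ℝ :=
  fun a => ∑ ω, if φ ω = a then P ω else 0

/-- Mutual information `I(φA; φB)` under the pmf `P`. -/
def MIof {Ω A B : Type} [Fintype Ω] [Fintype A] [Fintype B]
    (P : Ω → ℝ) (φA : Ω → A) (φB : Ω → B) : ℝ :=
  KL (pushf P fun ω => (φA ω, φB ω)) (fun p => pushf P φA p.1 * pushf P φB p.2)

/-- Shannon entropy of a pmf on a finite set (natural log). -/
def entropy {Ω : Type} [Fintype Ω] (P : Ω → ℝ) : ℝ :=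
  -∑ ω, P ω * Real.log (P ω)

end

lemma pushf_nonneg {Ω A : Type} [Fintype Ω] (P : Ω → ℝ) (hP : ∀ ω, 0 ≤ P ω)
    (φ : Ω → A) (a : A) : 0 ≤ pushf P φ a := by
  refine Finset.sum_nonneg fun ω _ => ?_
  split_ifs; exacts [hP ω, le_rfl]

lemma pushf_sum {Ω A : Type} [Fintype Ω] [Fintype A] (P : Ω → ℝ) (φ : Ω → A) :
    ∑ a, pushf P φ a = ∑ ω, P ω := by
  unfold pushf
  rw [Finset.sum_comm]
  simp [Finset.sum_ite_eq]

lemma pushf_le {Ω A : Type} [Fintype Ω] (P : Ω → ℝ) (hP : ∀ ω, 0 ≤ P ω)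
    (φ : Ω → A) (ω : Ω) : P ω ≤ pushf P φ (φ ω) := by
  have h := Finset.single_le_sum (f := fun ω' => if φ ω' = φ ω then P ω' else 0)
    (fun i _ => by split_ifs; exacts [hP i, le_rfl]) (Finset.mem_univ ω)
  simpa [pushf] using h

lemma sum_pushf_mul {Ω A : Type} [Fintype Ω] [Fintype A] (P : Ω → ℝ) (φ : Ω → A)
    (g : A → ℝ) : ∑ a, pushf P φ a * g a = ∑ ω, P ω * g (φ ω) := by
  unfold pushf
  simp only [Finset.sum_mul, ite_mul, zero_mul]
  rw [Finset.sum_comm]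
  simp [Finset.sum_ite_eq]

lemma pushf_comp {Ω A B : Type} [Fintype Ω] [Fintype A] (P : Ω → ℝ) (φ : Ω → A)
    (g : A → B) (b : B) :
    pushf (pushf P φ) g b = pushf P (fun ω => g (φ ω)) b := by
  have h1 : pushf (pushf P φ) g b = ∑ a, pushf P φ a * (if g a = b then (1:ℝ) else 0) := by
    refine Finset.sum_congr rfl fun a _ => ?_
    split_ifs <;> simp
  rw [h1, sum_pushf_mul]
  refine Finset.sum_congr rfl fun ω _ => ?_
  split_ifs <;> simp

lemma KL_eq {Ω : Type} [Fintype Ω] (P Q : Ω → ℝ) (hac : ∀ ω, Q ω = 0 → P ω = 0) :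
    KL P Q = -entropy P - ∑ ω, P ω * Real.log (Q ω) := by
  unfold KL entropy
  rw [neg_neg, ← Finset.sum_sub_distrib]
  refine Finset.sum_congr rfl fun ω _ => ?_
  by_cases h : P ω = 0
  · simp [h]
  · have hQ : Q ω ≠ 0 := fun hq => h (hac ω hq)
    rw [Real.log_div h hQ]; ring

lemma KL_nonneg {Ω : Type} [Fintype Ω] (P Q : Ω → ℝ) (hP : IsPMF P)
    (hQ0 : ∀ ω, 0 ≤ Q ω) (hQ1 : ∑ ω, Q ω ≤ 1)
    (hac : ∀ ω, Q ω = 0 → P ω = 0) : 0 ≤ KL P Q := by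
  have key : ∀ ω, P ω * Real.log (Q ω / P ω) ≤ Q ω - P ω := by
    intro ω
    rcases eq_or_lt_of_le (hP.1 ω) with h | h
    · simp [← h]; exact hQ0 ω
    · have hQ : 0 < Q ω := lt_of_le_of_ne (hQ0 ω) fun e => h.ne' (hac ω e.symm)
      have hpos : 0 < Q ω / P ω := div_pos hQ h
      have hlog := Real.log_le_sub_one_of_pos hpos
      calc P ω * Real.log (Q ω / P ω) ≤ P ω * (Q ω / P ω - 1) :=
            mul_le_mul_of_nonneg_left hlog h.le
        _ = Q ω - P ω := by field_simp
  have h2 : ∑ ω, P ω * Real.log (Q ω / P ω) ≤ 0 := by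
    calc ∑ ω, P ω * Real.log (Q ω / P ω) ≤ ∑ ω, (Q ω - P ω) :=
          Finset.sum_le_sum fun ω _ => key ω
      _ = (∑ ω, Q ω) - 1 := by rw [Finset.sum_sub_distrib, hP.2]
      _ ≤ 0 := by linarith
  have h3 : KL P Q = -∑ ω, P ω * Real.log (Q ω / P ω) := by
    unfold KL
    rw [← Finset.sum_neg_distrib]
    refine Finset.sum_congr rfl fun ω _ => ?_
    by_cases h : P ω = 0
    · simp [h]
    · have hQ : Q ω ≠ 0 := fun hq => h (hac ω hq)
      rw [Real.log_div h hQ, Real.log_div hQ h]; ring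
  rw [h3]; linarith

lemma entropy_subadd {n : ℕ} {X : Type} [Fintype X] (μ : (Fin n → X) → ℝ)
    (hμ : IsPMF μ) :
    entropy μ ≤ ∑ j, entropy (pushf μ fun f => f j) := by
  set ν : (Fin n → X) → ℝ := fun f => ∏ j, pushf μ (fun g => g j) (f j) with hν
  have hν0 : ∀ f, 0 ≤ ν f := fun f =>
    Finset.prod_nonneg fun j _ => pushf_nonneg μ hμ.1 _ _
  have hν1 : ∑ f, ν f = 1 := by
    calc ∑ f, ν f
        = ∑ f ∈ Fintype.piFinset (fun _ : Fin n => (Finset.univ : Finset X)),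
            ∏ j, pushf μ (fun g => g j) (f j) := by
          simp [hν, Fintype.piFinset_univ]
      _ = ∏ j, ∑ x, pushf μ (fun g => g j) x := (Finset.prod_univ_sum _ _).symm
      _ = 1 := by simp [pushf_sum, hμ.2]
  have hacν : ∀ f, ν f = 0 → μ f = 0 := by
    intro f h0
    obtain ⟨j, -, hj⟩ := Finset.prod_eq_zero_iff.mp h0
    have := pushf_le μ hμ.1 (fun g => g j) f
    have := hμ.1 f
    nlinarith [hj ▸ this]
  have hKL := KL_nonneg μ ν hμ hν0 (le_of_eq hν1) hacν
  have hsplit := KL_eq μ ν hacν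
  have hcross : ∑ f, μ f * Real.log (ν f)
      = ∑ j, ∑ x, pushf μ (fun g => g j) x * Real.log (pushf μ (fun g => g j) x) := by
    have step1 : ∑ f, μ f * Real.log (ν f)
        = ∑ f, ∑ j, μ f * Real.log (pushf μ (fun g => g j) (f j)) := by
      refine Finset.sum_congr rfl fun f _ => ?_
      by_cases h : μ f = 0
      · simp [h]
      · have hνf : ν f ≠ 0 := fun e => h (hacν f e)
        have hfac : ∀ j ∈ Finset.univ, pushf μ (fun g => g j) (f j) ≠ 0 := by
          intro j _ hj
          exact hνf (Finset.prod_eq_zero (Finset.mem_univ j) hj)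
        rw [hν, Real.log_prod hfac, Finset.mul_sum]
    rw [step1, Finset.sum_comm]
    refine Finset.sum_congr rfl fun j _ => ?_
    rw [sum_pushf_mul μ (fun g => g j) (fun x => Real.log (pushf μ (fun g => g j) x))]
  rw [hsplit, hcross] at hKL
  unfold entropy at hKL ⊢
  rw [Finset.sum_neg_distrib]
  linarith [hKL]

/-- **Tensorization inequality for conditional entropy plus KL divergence.**
For any pmf `P̃` on `Xⁿ × Yⁿ` absolutely continuous w.r.t. `P_XYⁿ`,
`H(Ỹⁿ|X̃ⁿ) + D(P̃‖P_XYⁿ) ≥ Σ_j (H(Ỹ_j|X̃_j) + D(P̃_{(X_j,Y_j)}‖P_XY))`,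
where `H(B|A) = H(law of (A,B)) − H(law of A)`. -/
theorem cond_entropy_plus_kl_tensorization
    (X Y : Type) [Fintype X] [Fintype Y] [Nonempty X] [Nonempty Y]
    (PXY : X × Y → ℝ) (hPXY : IsPMF PXY)
    (n : ℕ)
    (Pt : (Fin n → X) × (Fin n → Y) → ℝ) (hPt : IsPMF Pt)
    (hac : ∀ p : (Fin n → X) × (Fin n → Y),
      (∏ i, PXY (p.1 i, p.2 i)) = 0 → Pt p = 0) :
    (entropy Pt - entropy (pushf Pt Prod.fst))
        + KL Pt (fun p => ∏ i, PXY (p.1 i, p.2 i))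
      ≥ ∑ j : Fin n,
          ((entropy (pushf Pt fun p => (p.1 j, p.2 j))
              - entropy (pushf Pt fun p => p.1 j))
            + KL (pushf Pt fun p => (p.1 j, p.2 j)) PXY) := by
  set Q : (Fin n → X) × (Fin n → Y) → ℝ := fun p => ∏ i, PXY (p.1 i, p.2 i) with hQ
  have hacj : ∀ j : Fin n, ∀ ab : X × Y, PXY ab = 0 →
      pushf Pt (fun p => (p.1 j, p.2 j)) ab = 0 := by
    intro j ab h0
    refine Finset.sum_eq_zero fun p _ => ?_
    split_ifs with h
    · exact hac p (Finset.prod_eq_zero (Finset.mem_univ j) ((congrArg PXY h).trans h0))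
    · rfl
  have hKLj : ∀ j : Fin n, KL (pushf Pt fun p => (p.1 j, p.2 j)) PXY
      = -entropy (pushf Pt fun p => (p.1 j, p.2 j))
        - ∑ ab, pushf Pt (fun p => (p.1 j, p.2 j)) ab * Real.log (PXY ab) :=
    fun j => KL_eq _ _ (hacj j)
  have hKLmain : KL Pt Q = -entropy Pt - ∑ p, Pt p * Real.log (Q p) := KL_eq _ _ hac
  have hcross : ∑ p, Pt p * Real.log (Q p)
      = ∑ j, ∑ ab, pushf Pt (fun p => (p.1 j, p.2 j)) ab * Real.log (PXY ab) := by
    have step1 : ∑ p, Pt p * Real.log (Q p)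
        = ∑ p, ∑ j : Fin n, Pt p * Real.log (PXY (p.1 j, p.2 j)) := by
      refine Finset.sum_congr rfl fun p _ => ?_
      by_cases h : Pt p = 0
      · simp [h]
      · have hq : Q p ≠ 0 := fun e => h (hac p e)
        have hfac : ∀ i ∈ (Finset.univ : Finset (Fin n)), PXY (p.1 i, p.2 i) ≠ 0 :=
          fun i _ hi => hq (Finset.prod_eq_zero (Finset.mem_univ i) hi)
        have hQp : Q p = ∏ i, PXY (p.1 i, p.2 i) := rfl
        rw [hQp, Real.log_prod hfac, Finset.mul_sum]
    rw [step1, Finset.sum_comm]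
    refine Finset.sum_congr rfl fun j _ => ?_
    rw [sum_pushf_mul Pt (fun p => (p.1 j, p.2 j)) (fun ab => Real.log (PXY ab))]
  have hmargX : ∀ j : Fin n, (pushf Pt fun p => p.1 j)
      = pushf (pushf Pt Prod.fst) (fun f => f j) := by
    intro j; funext x; rw [pushf_comp]
  have hsub : entropy (pushf Pt Prod.fst)
      ≤ ∑ j, entropy (pushf Pt fun p => p.1 j) := by
    have hpmf : IsPMF (pushf Pt Prod.fst) :=
      ⟨pushf_nonneg Pt hPt.1 _, by rw [pushf_sum, hPt.2]⟩
    have h := entropy_subadd (pushf Pt Prod.fst) hpmf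
    simp only [hmargX]
    exact h
  have hRHS : ∑ j : Fin n, ((entropy (pushf Pt fun p => (p.1 j, p.2 j))
        - entropy (pushf Pt fun p => p.1 j))
        + KL (pushf Pt fun p => (p.1 j, p.2 j)) PXY)
      = ∑ j : Fin n, (-(entropy (pushf Pt fun p => p.1 j))
        - ∑ ab, pushf Pt (fun p => (p.1 j, p.2 j)) ab * Real.log (PXY ab)) := by
    refine Finset.sum_congr rfl fun j _ => ?_
    rw [hKLj j]; ring
  rw [ge_iff_le, hRHS, hKLmain, hcross]
  rw [Finset.sum_sub_distrib, Finset.sum_neg_distrib]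
  linarith [hsub]
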